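/- Let M be a commutative R-algebra and H a cocommutative R-coalgebra. Then there exists a commutative R-algebra H(M), universal among commutative R-algebras A equipped with a linear map H⊗M → A, (h,m) ↦ h(m), satisfying h(mn) = Σ h'(m)h''(n) and h(1) = η(h)·1 (where Δ(h) = Σ h'⊗h''). -/

import Mathlib

open TensorProduct Coalgebra

/-- A bundled commutative algebra over `R`. -/
structure CommAlgebraOver (R : Type) [CommRing R] : Type 1 where
  carrier : Type
  [commRing : CommRing carrier]
  [algebra : Algebra R carrier]

attribute [instance] CommAlgebraOver.commRing CommAlgebraOver.algebra

/-- The map `φ : H ⊗ M → A`, `(h, m) ↦ h(m)`, satisfies `h(mn) = Σ h'(m)h''(n)`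
and `h(1) = η(h)·1`. -/
def Measures (R H M A : Type) [CommRing R] [AddCommGroup H] [Module R H]
    [Coalgebra R H] [CommRing M] [Algebra R M] [CommRing A] [Algebra R A]
    (φ : H →ₗ[R] M →ₗ[R] A) : Prop :=
  (∀ h : H, φ h 1 = algebraMap R A (counit (R := R) h)) ∧
  (∀ (h : H) (m n : M) (ι : Type) (t : Finset ι) (h₁ h₂ : ι → H),
    comul (R := R) h = ∑ i ∈ t, h₁ i ⊗ₜ[R] h₂ i →
    φ h (m * n) = ∑ i ∈ t, φ (h₁ i) m * φ (h₂ i) n)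

section Construction

open MvPolynomial

variable (R H M : Type) [CommRing R] [AddCommGroup H] [Module R H] [Coalgebra R H]
  [CommRing M] [Algebra R M]

/-- The ideal of relations for the universal measuring algebra. -/
noncomputable def measIdeal : Ideal (MvPolynomial (H × M) R) :=
  Ideal.span { p | (∃ h h' m, p = X (h + h', m) - X (h, m) - X (h', m)) ∨
    (∃ (r : R) (h : H) (m : M), p = X (r • h, m) - C r * X (h, m)) ∨
    (∃ h m m', p = X (h, m + m') - X (h, m) - X (h, m')) ∨
    (∃ (h : H) (r : R) (m : M), p = X (h, r • m) - C r * X (h, m)) ∨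
    (∃ h, p = X (h, (1 : M)) - C (Coalgebra.counit (R := R) h)) ∨
    (∃ (h : H) (m n : M) (ι : Type) (t : Finset ι) (h₁ h₂ : ι → H),
      comul (R := R) h = ∑ i ∈ t, h₁ i ⊗ₜ[R] h₂ i ∧
      p = X (h, m * n) - ∑ i ∈ t, X (h₁ i, m) * X (h₂ i, n)) }

abbrev MeasAlg := MvPolynomial (H × M) R ⧸ measIdeal R H M

noncomputable def measφ : H →ₗ[R] M →ₗ[R] MeasAlg R H M where
  toFun h :=
    { toFun := fun m => Ideal.Quotient.mk (measIdeal R H M) (X (h, m))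
      map_add' := fun m m' => by
        have hmem : (X (h, m + m') : MvPolynomial (H × M) R) - (X (h, m) + X (h, m')) ∈
            measIdeal R H M := by
          rw [← sub_sub]
          exact Ideal.subset_span (Or.inr (Or.inr (Or.inl ⟨h, m, m', rfl⟩)))
        exact (Ideal.Quotient.eq.2 hmem).trans (map_add _ _ _)
      map_smul' := fun r m => by
        have hmem : (X (h, r • m) : MvPolynomial (H × M) R) - C r * X (h, m) ∈
            measIdeal R H M :=
          Ideal.subset_span (Or.inr (Or.inr (Or.inr (Or.inl ⟨h, r, m, rfl⟩))))
        have := Ideal.Quotient.eq.2 hmem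
        simp only [RingHom.id_apply]
        rw [this, ← smul_eq_C_mul]
        rfl }
  map_add' h h' := by
    ext m
    have hmem : (X (h + h', m) : MvPolynomial (H × M) R) - (X (h, m) + X (h', m)) ∈
        measIdeal R H M := by
      rw [← sub_sub]
      exact Ideal.subset_span (Or.inl ⟨h, h', m, rfl⟩)
    exact (Ideal.Quotient.eq.2 hmem).trans (map_add _ _ _)
  map_smul' r h := by
    ext m
    have hmem : (X (r • h, m) : MvPolynomial (H × M) R) - C r * X (h, m) ∈
        measIdeal R H M :=
      Ideal.subset_span (Or.inr (Or.inl ⟨r, h, m, rfl⟩))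
    have := Ideal.Quotient.eq.2 hmem
    simp only [RingHom.id_apply, LinearMap.smul_apply, LinearMap.coe_mk, AddHom.coe_mk]
    rw [this, ← smul_eq_C_mul]
    rfl

theorem measφ_measures : Measures R H M (MeasAlg R H M) (measφ R H M) := by
  constructor
  · intro h
    have hmem : (X (h, (1 : M)) : MvPolynomial (H × M) R) - C (counit (R := R) h) ∈
        measIdeal R H M :=
      Ideal.subset_span (Or.inr (Or.inr (Or.inr (Or.inr (Or.inl ⟨h, rfl⟩)))))
    have h1 := Ideal.Quotient.eq.2 hmem
    show Ideal.Quotient.mk _ (X (h, (1:M))) = _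
    rw [h1, IsScalarTower.algebraMap_apply R (MvPolynomial (H × M) R) (MeasAlg R H M),
      MvPolynomial.algebraMap_eq, Ideal.Quotient.algebraMap_eq]
  · intro h m n ι t h₁ h₂ hrep
    have hmem : (X (h, m * n) : MvPolynomial (H × M) R) -
        ∑ i ∈ t, X (h₁ i, m) * X (h₂ i, n) ∈ measIdeal R H M :=
      Ideal.subset_span (Or.inr (Or.inr (Or.inr (Or.inr (Or.inr
        ⟨h, m, n, ι, t, h₁, h₂, hrep, rfl⟩)))))
    have h1 := Ideal.Quotient.eq.2 hmem
    show Ideal.Quotient.mk _ (X (h, m * n)) = _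
    rw [h1, map_sum]
    simp only [map_mul]
    rfl

end Construction

/-- For a commutative `R`-algebra `M` and a cocommutative `R`-coalgebra `H`,
there exists a universal commutative `R`-algebra `H(M)` equipped with a map
`H ⊗ M → H(M)`, `(h, m) ↦ h(m)`, satisfying `h(mn) = Σ h'(m)h''(n)` and
`h(1) = η(h)·1`. -/
theorem universal_measuring_algebra_exists (R H M : Type) [CommRing R]
    [AddCommGroup H] [Module R H] [Coalgebra R H]
    (hcoc : ∀ h : H, TensorProduct.comm R H H (comul (R := R) h) = comul (R := R) h)
    [CommRing M] [Algebra R M] :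
    ∃ (A : CommAlgebraOver R) (φ : H →ₗ[R] M →ₗ[R] A.carrier),
      Measures R H M A.carrier φ ∧
      ∀ (B : CommAlgebraOver R) (ψ : H →ₗ[R] M →ₗ[R] B.carrier),
        Measures R H M B.carrier ψ →
        ∃! f : A.carrier →ₐ[R] B.carrier, ∀ (h : H) (m : M), f (φ h m) = ψ h m := by
  classical
  refine ⟨{ carrier := MeasAlg R H M }, measφ R H M, measφ_measures R H M, ?_⟩
  intro B ψ hψ
  set e : MvPolynomial (H × M) R →ₐ[R] B.carrier :=
    MvPolynomial.aeval (fun p : H × M => ψ p.1 p.2) with he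
  have hker : ∀ p ∈ measIdeal R H M, e p = 0 := by
    have hle : measIdeal R H M ≤ RingHom.ker (e : MvPolynomial (H × M) R →+* B.carrier) := by
      rw [measIdeal, Ideal.span_le]
      rintro q (⟨h, h', m, rfl⟩ | ⟨r, h, m, rfl⟩ | ⟨h, m, m', rfl⟩ | ⟨h, r, m, rfl⟩ |
        ⟨h, rfl⟩ | ⟨h, m, n, ι, t, h₁, h₂, hrep, rfl⟩) <;>
        simp only [RingHom.mem_ker, SetLike.mem_coe, map_sub, map_add, map_mul, map_sum,
          AlgHom.coe_toRingHom, he, MvPolynomial.aeval_X, MvPolynomial.aeval_C, sub_eq_zero]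
      · rw [LinearMap.add_apply]; ring
      · rw [map_smul, LinearMap.smul_apply, Algebra.smul_def]
      · ring
      · rw [map_smul, Algebra.smul_def]
      · exact hψ.1 h
      · exact hψ.2 h m n ι t h₁ h₂ hrep
    exact fun p hp => hle hp
  let f : MeasAlg R H M →ₐ[R] B.carrier := Ideal.Quotient.liftₐ (measIdeal R H M) e hker
  have hf : ∀ (h : H) (m : M), f (measφ R H M h m) = ψ h m := by
    intro h m
    show f (Ideal.Quotient.mk _ (MvPolynomial.X (h, m))) = _
    rw [show f (Ideal.Quotient.mk _ (MvPolynomial.X (h, m))) = e (MvPolynomial.X (h, m)) from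
      Ideal.Quotient.liftₐ_apply _ _ _ _]
    simp [he]
  refine ⟨f, hf, ?_⟩
  intro g hg
  apply AlgHom.ext
  intro a
  obtain ⟨p, rfl⟩ := Ideal.Quotient.mk_surjective a
  induction p using MvPolynomial.induction_on with
  | C r =>
      rw [show (Ideal.Quotient.mk (measIdeal R H M)) (MvPolynomial.C r) =
        algebraMap R (MeasAlg R H M) r from by
          rw [IsScalarTower.algebraMap_apply R (MvPolynomial (H × M) R) (MeasAlg R H M),
            MvPolynomial.algebraMap_eq, Ideal.Quotient.algebraMap_eq]]
      rw [AlgHom.commutes, AlgHom.commutes]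
  | add p q hp hq => rw [map_add, map_add, map_add, hp, hq]
  | mul_X p s hp =>
      rw [map_mul, map_mul, map_mul, hp]
      congr 1
      obtain ⟨h, m⟩ := s
      rw [show (Ideal.Quotient.mk (measIdeal R H M)) (MvPolynomial.X (h, m)) =
        measφ R H M h m from rfl, hg h m, hf h m]
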